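/- Let F : ℝ^n ⇉ ℝ^m be a set-valued mapping with closed graph and ȳ ∈ J(F). If F is linearly open at infinity around (∞, ȳ) — i.e., there exist constants R > 0, μ > 0, ε > 0 and a neighborhood V of ȳ in ℝ^m such that (F(x) + μr𝔹) ∩ V ⊆ F(x + r𝔹) for every x with ‖x‖ > R and every r ∈ (0, ε) — then F is metrically regular at infinity around (∞, ȳ): there exist constants R' > 0, ℓ > 0, γ > 0 and a neighborhood V' of ȳ such that dist(x, F⁻¹(y)) ≤ ℓ·dist(y, F(x)) for all x with ‖x‖ > R' and all y ∈ V' with dist(y, F(x)) < γ. -/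

import Mathlib

open Filter Topology Set Metric Pointwise
open scoped RealInnerProductSpace ENNReal

noncomputable section

variable {E F G : Type*}
  [NormedAddCommGroup E] [InnerProductSpace ℝ E]
  [NormedAddCommGroup F] [InnerProductSpace ℝ F]
  [NormedAddCommGroup G] [InnerProductSpace ℝ G]

/-- The regular (Fréchet) normal cone to a subset of a product of inner product
spaces, at a point `p` (empty if `p ∉ Ω`). -/
def frechetNormalCone2 (Ω : Set (E × F)) (p : E × F) : Set (E × F) :=
  {ξ | p ∈ Ω ∧ ∀ ε > (0:ℝ), ∀ᶠ q in nhdsWithin p Ω,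
      ⟪ξ.1, q.1 - p.1⟫ + ⟪ξ.2, q.2 - p.2⟫ ≤ ε * ‖q - p‖}

/-- The limiting (Mordukhovich) normal cone. -/
def limitingNormalCone2 (Ω : Set (E × F)) (p : E × F) : Set (E × F) :=
  {ξ | ∃ pk : ℕ → E × F, ∃ ξk : ℕ → E × F,
    (∀ k, pk k ∈ Ω) ∧ Tendsto pk atTop (𝓝 p) ∧
    (∀ k, ξk k ∈ frechetNormalCone2 Ω (pk k)) ∧ Tendsto ξk atTop (𝓝 ξ)}

/-- The normal cone to `Ω ⊆ E × F` at `(∞, ȳ)`. -/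
def normalConeAtInfty (Ω : Set (E × F)) (ybar : F) : Set (E × F) :=
  {ξ | ∃ pk : ℕ → E × F, ∃ ξk : ℕ → E × F,
    (∀ k, pk k ∈ Ω) ∧ Tendsto (fun k => ‖(pk k).1‖) atTop atTop ∧
    Tendsto (fun k => (pk k).2) atTop (𝓝 ybar) ∧
    (∀ k, ξk k ∈ frechetNormalCone2 Ω (pk k)) ∧ Tendsto ξk atTop (𝓝 ξ)}

/-- `Ω ⊆ E × F` is locally closed at `(∞, ȳ)`. -/
def LocallyClosedAtInfty (Ω : Set (E × F)) (ybar : F) : Prop :=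
  ∃ R > (0:ℝ), ∃ V ∈ 𝓝 ybar, IsClosed V ∧
    IsClosed (Ω ∩ {p : E × F | R ≤ ‖p.1‖ ∧ p.2 ∈ V})

/-- Graph of a set-valued mapping. -/
def svGraph (S : E → Set F) : Set (E × F) := {p | p.2 ∈ S p.1}

/-- Jelonek set of a set-valued mapping. -/
def jelonek (S : E → Set F) : Set F :=
  {y | ∃ xk : ℕ → E, ∃ yk : ℕ → F,
    Tendsto (fun k => ‖xk k‖) atTop atTop ∧ (∀ k, yk k ∈ S (xk k)) ∧
    Tendsto yk atTop (𝓝 y)}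

/-- Coderivative of a set-valued mapping at a point of its graph. -/
def coderiv (S : E → Set F) (x : E) (y : F) (v : F) : Set E :=
  {u | (u, -v) ∈ limitingNormalCone2 (svGraph S) (x, y)}

/-- Coderivative of a set-valued mapping at `(∞, ȳ)`. -/
def coderivAtInfty (S : E → Set F) (ybar : F) (v : F) : Set E :=
  {u | (u, -v) ∈ normalConeAtInfty (svGraph S) ybar}

/-- Regular normal cone, one-space version. -/
def frechetNormalCone1 (Ω : Set E) (x : E) : Set E :=
  {ξ | x ∈ Ω ∧ ∀ ε > (0:ℝ), ∀ᶠ x' in nhdsWithin x Ω, ⟪ξ, x' - x⟫ ≤ ε * ‖x' - x‖}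

/-- Normal cone at infinity to an unbounded subset of `E`. -/
def normalConeAtInfty1 (Ω : Set E) : Set E :=
  {ξ | ∃ xk : ℕ → E, ∃ ξk : ℕ → E, (∀ k, xk k ∈ Ω) ∧
    Tendsto (fun k => ‖xk k‖) atTop atTop ∧
    (∀ k, ξk k ∈ frechetNormalCone1 Ω (xk k)) ∧ Tendsto ξk atTop (𝓝 ξ)}

/-- Epigraph of an extended-real-valued function. -/
def epiSet (f : E → EReal) : Set (E × ℝ) := {p | f p.1 ≤ (p.2 : EReal)}

/-- Graph of an extended-real-valued function, as a subset of `E × ℝ`. -/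
def gphFun (f : E → EReal) : Set (E × ℝ) := {p | f p.1 = (p.2 : EReal)}

/-- Jelonek set of a function. -/
def jelonekFun (f : E → EReal) : Set ℝ :=
  {y | ∃ xk : ℕ → E, Tendsto (fun k => ‖xk k‖) atTop atTop ∧
    Tendsto (fun k => f (xk k)) atTop (𝓝 (y : EReal))}

/-- Limiting subdifferential of `f` at `x` (empty outside `dom f`). -/
def limSubdiff (f : E → EReal) (x : E) : Set E :=
  {u | ∃ r : ℝ, f x = (r : EReal) ∧
    (u, (-1 : ℝ)) ∈ limitingNormalCone2 (epiSet f) (x, r)}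

/-- Limiting subdifferential of `f` at `(∞, ȳ)`. -/
def limSubdiffAtInfty (f : E → EReal) (ybar : ℝ) : Set E :=
  {u | (u, (-1 : ℝ)) ∈ normalConeAtInfty (epiSet f) ybar}

/-- Singular subdifferential of `f` at `(∞, ȳ)`. -/
def singSubdiffAtInfty (f : E → EReal) (ybar : ℝ) : Set E :=
  {u | (u, (0 : ℝ)) ∈ normalConeAtInfty (epiSet f) ybar}

/-- Inverse of a set-valued mapping. -/
def svInv (S : E → Set F) (y : F) : Set E := {x | y ∈ S x}

/-- Preimage `F⁻¹(V) = {x : F(x) ∩ V ≠ ∅}`. -/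
def svPreimage (S : E → Set F) (V : Set F) : Set E := {x | (S x ∩ V).Nonempty}

/-- Distance function of a set-valued mapping, with value `+∞` on empty values. -/
def dSV (S : E → Set F) (p : E × F) : EReal :=
  ((EMetric.infEdist p.2 (S p.1) : ℝ≥0∞) : EReal)

/-- Regular normal cone on `(E × F) × ℝ`. -/
def frechetNormalCone3 (Ω : Set ((E × F) × ℝ)) (p : (E × F) × ℝ) : Set ((E × F) × ℝ) :=
  {ξ | p ∈ Ω ∧ ∀ ε > (0:ℝ), ∀ᶠ q in nhdsWithin p Ω,
      ⟪ξ.1.1, q.1.1 - p.1.1⟫ + ⟪ξ.1.2, q.1.2 - p.1.2⟫ + ξ.2 * (q.2 - p.2)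
        ≤ ε * ‖q - p‖}

/-- Limiting normal cone on `(E × F) × ℝ`. -/
def limitingNormalCone3 (Ω : Set ((E × F) × ℝ)) (p : (E × F) × ℝ) : Set ((E × F) × ℝ) :=
  {ξ | ∃ pk ξk : ℕ → (E × F) × ℝ, (∀ k, pk k ∈ Ω) ∧ Tendsto pk atTop (𝓝 p) ∧
    (∀ k, ξk k ∈ frechetNormalCone3 Ω (pk k)) ∧ Tendsto ξk atTop (𝓝 ξ)}

/-- Limiting subdifferential of the distance function `d_F`. -/
def limSubdiffD (S : E → Set F) (p : E × F) : Set (E × F) :=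
  {w | ∃ r : ℝ, dSV S p = (r : EReal) ∧
    (w, (-1 : ℝ)) ∈ limitingNormalCone3 {q : (E × F) × ℝ | dSV S q.1 ≤ (q.2 : EReal)} (p, r)}

/-- The set `J⁺(F₁ + F₂, y)`. -/
def jplus (S₁ S₂ : E → Set F) (y : F) : Set (F × F) :=
  {q | ∃ xk : ℕ → E, ∃ y1k y2k : ℕ → F,
    Tendsto (fun k => ‖xk k‖) atTop atTop ∧
    (∀ k, y1k k ∈ S₁ (xk k)) ∧ (∀ k, y2k k ∈ S₂ (xk k)) ∧
    Tendsto y1k atTop (𝓝 q.1) ∧ Tendsto y2k atTop (𝓝 q.2) ∧ q.1 + q.2 = y}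

/-- The set `J°(F₂ ∘ F₁, y)`. -/
def jcirc (S₁ : E → Set G) (S₂ : G → Set F) (y : F) : Set G :=
  {z | ∃ xk : ℕ → E, ∃ zk : ℕ → G, ∃ yk : ℕ → F,
    Tendsto (fun k => ‖xk k‖) atTop atTop ∧ (∀ k, zk k ∈ S₁ (xk k)) ∧
    (∀ k, yk k ∈ S₂ (zk k)) ∧ Tendsto zk atTop (𝓝 z) ∧ Tendsto yk atTop (𝓝 y)}

/-- Composition `F₂ ∘ F₁` of set-valued mappings. -/
def svComp (S₂ : G → Set F) (S₁ : E → Set G) (x : E) : Set F :=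
  {y | ∃ z ∈ S₁ x, y ∈ S₂ z}

abbrev Eucl (n : ℕ) := EuclideanSpace ℝ (Fin n)

/-- linear openness at infinity implies metric regularity at infinity. -/
theorem stmt11 {n m : ℕ} (S : Eucl n → Set (Eucl m)) (hS : IsClosed (svGraph S))
    (ybar : Eucl m) (hJ : ybar ∈ jelonek S)
    (hopen : ∃ R > (0:ℝ), ∃ μ > (0:ℝ), ∃ ε > (0:ℝ), ∃ V ∈ 𝓝 ybar,
      ∀ (x : Eucl n) (r : ℝ), R < ‖x‖ → 0 < r → r < ε →
        (S x + closedBall (0 : Eucl m) (μ * r)) ∩ V ⊆ ⋃ x' ∈ closedBall x r, S x') :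
    ∃ R' > (0:ℝ), ∃ ℓ > (0:ℝ), ∃ γ > (0:ℝ), ∃ V' ∈ 𝓝 ybar,
      ∀ (x : Eucl n) (y : Eucl m), R' < ‖x‖ → y ∈ V' →
        EMetric.infEdist y (S x) < ENNReal.ofReal γ →
        EMetric.infEdist x (svInv S y) ≤ ENNReal.ofReal ℓ * EMetric.infEdist y (S x) := by
  obtain ⟨R, hR, μ, hμ, ε, hε, V, hV, hopen⟩ := hopen
  refine ⟨R, hR, 2/μ, by positivity, μ*ε/2, by positivity, V, hV, ?_⟩
  intro x y hx hyV hd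
  by_cases hyx : y ∈ S x
  · have hx' : x ∈ svInv S y := hyx
    exact (le_of_eq (Metric.infEDist_zero_of_mem hx')).trans (zero_le (a := ENNReal.ofReal (2 / μ) * EMetric.infEdist y (S x)))
  · have hSx : IsClosed (S x) := by
      have hc : Continuous fun z : Eucl m => ((x, z) : Eucl n × Eucl m) :=
        continuous_const.prodMk continuous_id
      exact hS.preimage hc
    set D := EMetric.infEdist y (S x) with hD
    have hDne : D ≠ ⊤ := (lt_of_lt_of_le hd le_top).ne
    have hDpos : 0 < D := by
      rcases eq_or_ne D 0 with h0 | h0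
      · exact absurd (hSx.closure_eq ▸ EMetric.mem_closure_iff_infEdist_zero.2 h0) hyx
      · exact pos_iff_ne_zero.2 h0
    set d := D.toReal with hdd
    have hdpos : 0 < d := ENNReal.toReal_pos hDpos.ne' hDne
    have hDo : D = ENNReal.ofReal d := (ENNReal.ofReal_toReal hDne).symm
    have hdlt : d < μ*ε/2 := by
      have := (ENNReal.toReal_lt_toReal hDne ENNReal.ofReal_ne_top).2 hd
      rwa [ENNReal.toReal_ofReal (by positivity)] at this
    set r := 2*d/μ with hr
    have hrpos : 0 < r := by positivity
    have hrε : r < ε := by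
      rw [hr, div_lt_iff₀ hμ]
      linarith
    have hD2 : D < ENNReal.ofReal (μ * r) := by
      rw [hDo]
      apply ENNReal.ofReal_lt_ofReal_iff_of_nonneg hdpos.le |>.2
      have hμr : μ * r = 2 * d := by rw [hr]; field_simp
      rw [hμr]; linarith
    obtain ⟨y', hy'S, hy'⟩ := EMetric.infEdist_lt_iff.1 hD2
    have hdist : dist y y' ≤ μ * r := by
      have := (edist_lt_ofReal.1 hy').le
      simpa using this
    have hmem : y ∈ (S x + closedBall (0 : Eucl m) (μ * r)) ∩ V := by
      refine ⟨Set.mem_add.2 ⟨y', hy'S, y - y', ?_, by abel⟩, hyV⟩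
      simp only [mem_closedBall, dist_zero_right]
      rwa [← dist_eq_norm]
    have := hopen x r hx hrpos hrε hmem
    obtain ⟨x', hx'B, hyx'⟩ := mem_iUnion₂.1 this
    have hx'inv : x' ∈ svInv S y := hyx'
    calc EMetric.infEdist x (svInv S y) ≤ edist x x' := EMetric.infEdist_le_edist_of_mem hx'inv
      _ ≤ ENNReal.ofReal r := by
          rw [edist_dist]
          exact ENNReal.ofReal_le_ofReal (by simpa [dist_comm] using mem_closedBall.1 hx'B)
      _ = ENNReal.ofReal (2/μ) * D := by
          rw [hDo, ← ENNReal.ofReal_mul (by positivity)]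
          congr 1
          rw [hr]; ring
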